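/- Let Q be a commutative unital quantale. The quantale space of all prime ideals of Q (i.e., the prime spectrum with the topology whose closed sets are generated by the sets I↑ = {P prime : I ⊆ P}) is sober. -/

import Mathlib

namespace QuantalePaper

/-- An ideal of a complete lattice: nonempty, downward closed, closed under binary joins. -/
structure QIdeal (Q : Type*) [CompleteLattice Q] where
  carrier : Set Q
  nonempty' : carrier.Nonempty
  sup_mem' : ∀ ⦃x⦄, x ∈ carrier → ∀ ⦃y⦄, y ∈ carrier → x ⊔ y ∈ carrier
  lower' : ∀ ⦃x⦄, x ∈ carrier → ∀ ⦃l : Q⦄, l ≤ x → l ∈ carrier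

namespace QIdeal

variable {Q : Type*} [CompleteLattice Q]

instance : SetLike (QIdeal Q) Q where
  coe := carrier
  coe_injective := by rintro ⟨a,_,_,_⟩ ⟨b,_,_,_⟩ h; simpa using h

instance : PartialOrder (QIdeal Q) := .ofSetLike (QIdeal Q) Q

/-- A proper ideal. -/
def IsProper (I : QIdeal Q) : Prop := (⊤ : Q) ∉ I

/-- A maximal ideal: a proper ideal maximal among proper ideals. -/
def IsMaximal (I : QIdeal Q) : Prop :=
  I.IsProper ∧ ∀ J : QIdeal Q, J.IsProper → I ≤ J → J = I

/-- A prime ideal. -/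
def IsPrime [Mul Q] (I : QIdeal Q) : Prop :=
  I.IsProper ∧ ∀ x y : Q, x * y ∈ I → x ∈ I ∨ y ∈ I

end QIdeal

variable {Q : Type*} [CompleteLattice Q]

/-- The subbasic closed set `I↑ ∩ Σ` inside the subtype of a class `S` of ideals. -/
def up (S : Set (QIdeal Q)) (I : QIdeal Q) : Set ↥S := {J : ↥S | (I : Set Q) ⊆ (J : QIdeal Q)}

/-- The quantale topology on a class `S` of ideals, generated by the sets `up S I`
as a subbasis of closed sets. -/
def qTop (S : Set (QIdeal Q)) : TopologicalSpace ↥S :=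
  .generateFrom {U | ∃ I : QIdeal Q, U = (up S I)ᶜ}

/-- `X↑` for a set `X` of ideals: members of `S` containing the intersection `⋀X`,
with `∅↑ = ∅`. -/
def upSet (S : Set (QIdeal Q)) (X : Set (QIdeal Q)) : Set ↥S :=
  {J : ↥S | X.Nonempty ∧ ∀ x : Q, (∀ I ∈ X, x ∈ I) → x ∈ (J : QIdeal Q)}

/- ### Auxiliary material -/

lemma QIdeal.bot_mem (I : QIdeal Q) : (⊥ : Q) ∈ I := by
  obtain ⟨x, hx⟩ := I.nonempty'
  exact I.lower' hx bot_le

/-- The improper ideal (all of `Q`). -/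
def univIdeal (Q : Type*) [CompleteLattice Q] : QIdeal Q :=
  ⟨Set.univ, ⟨⊥, trivial⟩, fun _ _ _ _ => trivial, fun _ _ _ _ => trivial⟩

/-- Intersection of two ideals. -/
def infIdeal (I J : QIdeal Q) : QIdeal Q where
  carrier := (I : Set Q) ∩ (J : Set Q)
  nonempty' := ⟨⊥, I.bot_mem, J.bot_mem⟩
  sup_mem' := fun _ hx _ hy => ⟨I.sup_mem' hx.1 hy.1, J.sup_mem' hx.2 hy.2⟩
  lower' := fun _ hx _ hl => ⟨I.lower' hx.1 hl, J.lower' hx.2 hl⟩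

/-- The principal ideal generated by an element. -/
def prinIdeal (a : Q) : QIdeal Q where
  carrier := {x | x ≤ a}
  nonempty' := ⟨a, le_rfl⟩
  sup_mem' := fun _ hx _ hy => sup_le hx hy
  lower' := fun _ hx _ hl => le_trans hl hx

/-- The set of prime ideals. -/
abbrev Primes (Q : Type*) [CompleteLattice Q] [Mul Q] : Set (QIdeal Q) :=
  {P : QIdeal Q | QIdeal.IsPrime P}

/-- The intersection of a set of ideals from the primes. -/
def genIdeal [Mul Q] (T : Set ↥(Primes Q)) : QIdeal Q where
  carrier := {x | ∀ J ∈ T, x ∈ (J : QIdeal Q)}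
  nonempty' := ⟨⊥, fun J _ => (J : QIdeal Q).bot_mem⟩
  sup_mem' := fun _ hx _ hy J hJ => (J : QIdeal Q).sup_mem' (hx J hJ) (hy J hJ)
  lower' := fun _ hx _ hl J hJ => (J : QIdeal Q).lower' (hx J hJ) hl

section Prime

variable [CommMonoid Q] [IsQuantale Q]

lemma up_mono {I I' : QIdeal Q} (h : (I : Set Q) ⊆ (I' : Set Q)) :
    up (Primes Q) I' ⊆ up (Primes Q) I := fun _ hJ => Set.Subset.trans h hJ

lemma up_infIdeal (htop : (1 : Q) = ⊤) (I J : QIdeal Q) :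
    up (Primes Q) (infIdeal I J) ⊆ up (Primes Q) I ∪ up (Primes Q) J := by
  intro P hP
  by_contra hc
  rw [Set.mem_union, not_or] at hc
  obtain ⟨hI, hJ⟩ := hc
  rw [up, Set.mem_setOf_eq, Set.not_subset] at hI hJ
  obtain ⟨x, hxI, hxP⟩ := hI
  obtain ⟨y, hyJ, hyP⟩ := hJ
  have hxyx : x * y ≤ x := by
    calc x * y ≤ x * ⊤ := mul_le_mul_right le_top x
    _ = x * 1 := by rw [htop]
    _ = x := mul_one x
  have hxyy : x * y ≤ y := by
    calc x * y = y * x := mul_comm x y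
    _ ≤ y * ⊤ := mul_le_mul_right le_top y
    _ = y * 1 := by rw [htop]
    _ = y := mul_one y
  have hmem : x * y ∈ (infIdeal I J : Set Q) :=
    ⟨(I : QIdeal Q).lower' hxI hxyx, (J : QIdeal Q).lower' hyJ hxyy⟩
  rcases P.2.2 x y (hP hmem) with h | h
  · exact hxP h
  · exact hyP h

lemma up_univIdeal : up (Primes Q) (univIdeal Q) = ∅ := by
  ext P
  simp only [up, Set.mem_setOf_eq, Set.mem_empty_iff_false, iff_false]
  intro h
  exact P.2.1 (h (Set.mem_univ (⊤ : Q)))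

lemma isClosed_up (I : QIdeal Q) : @IsClosed _ (qTop (Primes Q)) (up (Primes Q) I) := by
  letI : TopologicalSpace ↥(Primes Q) := qTop (Primes Q)
  exact ⟨TopologicalSpace.GenerateOpen.basic _ ⟨I, rfl⟩⟩

/-- Every open set is a union of basic opens `(up I)ᶜ`. -/
lemma open_basis (htop : (1 : Q) = ⊤) {U : Set ↥(Primes Q)}
    (hU : @IsOpen _ (qTop (Primes Q)) U) :
    ∀ P ∈ U, ∃ I : QIdeal Q, P ∉ up (Primes Q) I ∧ (up (Primes Q) I)ᶜ ⊆ U := by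
  induction hU with
  | basic V hV =>
    obtain ⟨I, rfl⟩ := hV
    exact fun P hP => ⟨I, hP, le_refl _⟩
  | univ =>
    intro P _
    refine ⟨univIdeal Q, ?_, fun _ _ => trivial⟩
    rw [up_univIdeal]; exact Set.notMem_empty P
  | inter U V _ _ ihU ihV =>
    intro P hP
    obtain ⟨I, hPI, hIU⟩ := ihU P hP.1
    obtain ⟨J, hPJ, hJV⟩ := ihV P hP.2
    refine ⟨infIdeal I J, ?_, ?_⟩
    · intro h
      rcases up_infIdeal htop I J h with h' | h'
      · exact hPI h'
      · exact hPJ h'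
    · intro R hR
      have hI1 : (infIdeal I J : Set Q) ⊆ (I : Set Q) := fun x hx => hx.1
      have hJ1 : (infIdeal I J : Set Q) ⊆ (J : Set Q) := fun x hx => hx.2
      exact ⟨hIU fun h => hR (up_mono hI1 h), hJV fun h => hR (up_mono hJ1 h)⟩
  | sUnion 𝒰 _ ih =>
    rintro P ⟨U, hU, hPU⟩
    obtain ⟨I, hPI, hIU⟩ := ih U hU P hPU
    exact ⟨I, hPI, fun R hR => ⟨U, hU, hIU hR⟩⟩

/-- Characterization of membership in closed sets. -/
lemma mem_closed_iff (htop : (1 : Q) = ⊤) {C : Set ↥(Primes Q)}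
    (hC : @IsClosed _ (qTop (Primes Q)) C) (P : ↥(Primes Q)) :
    P ∈ C ↔ ∀ I : QIdeal Q, C ⊆ up (Primes Q) I → P ∈ up (Primes Q) I := by
  constructor
  · exact fun hP I hCI => hCI hP
  · intro h
    by_contra hPC
    obtain ⟨I, hPI, hIU⟩ := open_basis htop hC.isOpen_compl P hPC
    refine hPI (h I fun R hR => ?_)
    by_contra hRu
    exact (hIU hRu) hR

lemma closure_singleton (htop : (1 : Q) = ⊤) (P : ↥(Primes Q)) :
    @closure _ (qTop (Primes Q)) {P} = up (Primes Q) (P : QIdeal Q) := by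
  letI : TopologicalSpace ↥(Primes Q) := qTop (Primes Q)
  apply subset_antisymm
  · apply closure_minimal
    · intro R hR
      simp only [Set.mem_singleton_iff] at hR
      subst hR
      exact fun x hx => hx
    · exact isClosed_up _
  · intro R hR
    have hc : IsClosed (closure ({P} : Set ↥(Primes Q))) := isClosed_closure
    rw [mem_closed_iff htop hc]
    intro I hCI
    have hPI : P ∈ up (Primes Q) I := hCI (subset_closure rfl)
    exact fun x hx => hR (hPI hx)

end Prime

theorem stmt12 [CommMonoid Q] [IsQuantale Q] (htop : (1 : Q) = ⊤) :
    @QuasiSober ↥{P : QIdeal Q | P.IsPrime} (qTop {P : QIdeal Q | P.IsPrime}) ∧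
    @T0Space ↥{P : QIdeal Q | P.IsPrime} (qTop {P : QIdeal Q | P.IsPrime}) := by
  letI : TopologicalSpace ↥(Primes Q) := qTop (Primes Q)
  constructor
  · constructor
    intro C hirr hclosed
    obtain ⟨P₁, hP₁⟩ := hirr.nonempty
    have hprime : (genIdeal C).IsPrime := by
      constructor
      · intro htopmem
        exact P₁.2.1 (htopmem P₁ hP₁)
      · intro x y hxy
        by_contra hc
        push_neg at hc
        obtain ⟨hx, hy⟩ := hc
        have hsub : C ⊆ up (Primes Q) (prinIdeal x) ∪ up (Primes Q) (prinIdeal y) := by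
          intro R hR
          rcases R.2.2 x y (hxy R hR) with h | h
          · exact Or.inl (fun z hz => (R : QIdeal Q).lower' h hz)
          · exact Or.inr (fun z hz => (R : QIdeal Q).lower' h hz)
        have hx' : ∃ J ∈ C, x ∉ (J : QIdeal Q) := by
          by_contra hcon
          push_neg at hcon
          exact hx (fun J hJ => hcon J hJ)
        have hy' : ∃ J ∈ C, y ∉ (J : QIdeal Q) := by
          by_contra hcon
          push_neg at hcon
          exact hy (fun J hJ => hcon J hJ)
        rcases (isPreirreducible_iff_isClosed_union_isClosed.mp hirr.2) _ _
            (isClosed_up _) (isClosed_up _) hsub with h | h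
        · obtain ⟨J, hJ, hxJ⟩ := hx'
          exact hxJ (h hJ le_rfl)
        · obtain ⟨J, hJ, hyJ⟩ := hy'
          exact hyJ (h hJ le_rfl)
    refine ⟨⟨genIdeal C, hprime⟩, ?_⟩
    unfold IsGenericPoint
    rw [closure_singleton htop]
    apply subset_antisymm
    · intro R hR
      rw [mem_closed_iff htop hclosed]
      intro I hCI x hx
      exact hR (fun J hJ => hCI hJ hx)
    · intro R hR x hx
      exact hx R hR
  · constructor
    intro P R h
    rw [inseparable_iff_closure_eq, closure_singleton htop, closure_singleton htop] at h
    have h1 : P ∈ up (Primes Q) (R : QIdeal Q) := by rw [← h]; exact fun x hx => hx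
    have h2 : R ∈ up (Primes Q) (P : QIdeal Q) := by rw [h]; exact fun x hx => hx
    exact Subtype.ext (SetLike.coe_injective (subset_antisymm h2 h1))

end QuantalePaper
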